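/- Let (H, μ) be a finite-dimensional commutative Hilbertian Frobenius semigroup. Then (H, μ) has a unit element if and only if μ is surjective, if and only if μ† is injective, if and only if (H, μ) is semisimple. -/

import Mathlib

open scoped ComplexInnerProductSpace

section AuxFrob

variable {H : Type*} [NormedAddCommGroup H] [InnerProductSpace ℂ H]

/-- Key reformulation: orthogonality to all products ↔ being an annihilator. -/
lemma frob_ann (m : H →L[ℂ] H →L[ℂ] H)
    (hassoc : ∀ u v w : H, m (m u v) w = m u (m v w))
    (hfrob : ∀ u : H, ∃ us : H, ∀ v w : H, ⟪m u v, w⟫ = ⟪v, m us w⟫) (u : H) :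
    (∀ v w : H, ⟪u, m v w⟫ = 0) ↔ ∀ v : H, m v u = 0 := by
  constructor
  · intro h v
    obtain ⟨vs, hvs⟩ := hfrob v
    have h1 : ⟪m v u, m v u⟫ = 0 := by
      have := hvs u (m v u)
      rw [this, ← hassoc vs v u, h (m vs v) u]
    exact inner_self_eq_zero.mp h1
  · intro h v w
    obtain ⟨vs, hvs⟩ := hfrob v
    have h1 : ⟪m v w, u⟫ = 0 := by rw [hvs w u, h vs, inner_zero_right]
    rw [← inner_conj_symm, h1, map_zero]

/-- If the annihilator is trivial, a unit exists. -/
lemma frob_unit [FiniteDimensional ℂ H] (m : H →L[ℂ] H →L[ℂ] H)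
    (hassoc : ∀ u v w : H, m (m u v) w = m u (m v w))
    (hfrob : ∀ u : H, ∃ us : H, ∀ v w : H, ⟪m u v, w⟫ = ⟪v, m us w⟫)
    (hC : ∀ u : H, (∀ v : H, m v u = 0) → u = 0) :
    ∃ e : H, ∀ u : H, m e u = u := by
  classical
  choose st hst using hfrob
  let b := Module.finBasis ℂ H
  set t : H := ∑ i, m (st (b i)) (b i) with ht
  have key : ∀ u : H, m t u = 0 → u = 0 := by
    intro u hu
    have h2 : m t u = ∑ i, m (st (b i)) (m (b i) u) := by
      rw [ht, map_sum, ContinuousLinearMap.sum_apply]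
      exact Finset.sum_congr rfl fun i _ => hassoc _ _ _
    have h3 : (0 : ℂ) = ∑ i, ⟪m (b i) u, m (b i) u⟫ := by
      calc (0 : ℂ) = ⟪u, m t u⟫ := by rw [hu, inner_zero_right]
        _ = ∑ i, ⟪u, m (st (b i)) (m (b i) u)⟫ := by rw [h2, inner_sum]
        _ = ∑ i, ⟪m (b i) u, m (b i) u⟫ := by
            exact Finset.sum_congr rfl fun i _ => (hst (b i) u (m (b i) u)).symm
    have h4 : (0 : ℂ) = ∑ i, ((‖m (b i) u‖ : ℂ)) ^ 2 := by
      rw [h3]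
      exact Finset.sum_congr rfl fun i _ => inner_self_eq_norm_sq_to_K _
    have h5 : (0 : ℝ) = ∑ i, ‖m (b i) u‖ ^ 2 := by
      have h4' : ((0 : ℝ) : ℂ) = ((∑ i, ‖m (b i) u‖ ^ 2 : ℝ) : ℂ) := by
        push_cast
        simpa using h4
      exact_mod_cast h4'
    have h6 : ∀ i, m (b i) u = 0 := by
      intro i
      have := (Finset.sum_eq_zero_iff_of_nonneg
        (fun j _ => sq_nonneg ‖m (b j) u‖)).mp h5.symm i (Finset.mem_univ i)
      have : ‖m (b i) u‖ = 0 := by nlinarith [norm_nonneg (m (b i) u)]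
      simpa using this
    have h7 : ∀ v, m v u = 0 := by
      have h0 : ((m.flip u) : H →ₗ[ℂ] H) = (0 : H →ₗ[ℂ] H) :=
        b.ext fun i => by simpa [ContinuousLinearMap.flip_apply] using h6 i
      intro v
      have := LinearMap.congr_fun h0 v
      simpa [ContinuousLinearMap.flip_apply] using this
    exact hC u h7
  have hinj : Function.Injective (m t) := by
    intro a c hac
    have : m t (a - c) = 0 := by rw [map_sub, hac, sub_self]
    have := key _ this
    exact sub_eq_zero.mp this
  have hsurj : Function.Surjective (m t) := by
    have := (LinearMap.injective_iff_surjective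
      (f := ((m t : H →L[ℂ] H) : H →ₗ[ℂ] H))).mp hinj
    exact this
  obtain ⟨e, he⟩ := hsurj t
  refine ⟨e, fun u => ?_⟩
  apply hinj
  calc m t (m e u) = m (m t e) u := (hassoc t e u).symm
    _ = m t u := by rw [he]

/-- A normal operator whose square kills a vector kills the vector. -/
lemma normal_ker_step [CompleteSpace H] (A : H →L[ℂ] H)
    (hcom : ∀ z, A ((ContinuousLinearMap.adjoint A) z) = (ContinuousLinearMap.adjoint A) (A z))
    (w : H) (h : A (A w) = 0) : A w = 0 := by
  set B := ContinuousLinearMap.adjoint A with hB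
  have h1 : ⟪B (A w), B (A w)⟫ = 0 := by
    calc ⟪B (A w), B (A w)⟫ = ⟪A w, A (B (A w))⟫ := ContinuousLinearMap.adjoint_inner_left A _ _
      _ = ⟪A w, B (A (A w))⟫ := by rw [hcom]
      _ = 0 := by rw [h, map_zero, inner_zero_right]
  have h2 : B (A w) = 0 := inner_self_eq_zero.mp h1
  have h3 : ⟪A w, A w⟫ = 0 := by
    rw [← ContinuousLinearMap.adjoint_inner_right A w (A w), ← hB, h2, inner_zero_right]
  exact inner_self_eq_zero.mp h3

/-- A nilpotent normal operator is zero. -/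
lemma normal_nilpotent [CompleteSpace H] (A : H →L[ℂ] H)
    (hcom : ∀ z, A ((ContinuousLinearMap.adjoint A) z) = (ContinuousLinearMap.adjoint A) (A z)) :
    ∀ n : ℕ, (∀ v, (A ^ (n + 1)) v = 0) → ∀ v, A v = 0 := by
  intro n
  induction n with
  | zero => intro h v; simpa using h v
  | succ k ih =>
    intro h
    apply ih
    intro w
    have h2 : A (A ((A ^ k) w)) = 0 := by
      have := h w
      simpa [pow_succ', ContinuousLinearMap.mul_apply] using this
    have := normal_ker_step A hcom _ h2
    simpa [pow_succ', ContinuousLinearMap.mul_apply] using this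

end AuxFrob

/-- An element of a finite-dimensional commutative complex algebra killed by all
characters is nilpotent. -/
lemma char_nilpotent {A : Type*} [CommRing A] [Algebra ℂ A] [FiniteDimensional ℂ A]
    (u : A) (hu : ∀ χ : A →ₐ[ℂ] ℂ, χ u = 0) : IsNilpotent u := by
  haveI hart : IsArtinianRing A := IsArtinianRing.of_finite ℂ A
  have hmem : u ∈ Ideal.jacobson (⊥ : Ideal A) := by
    rw [Ideal.jacobson]
    apply Submodule.mem_sInf.mpr
    rintro J ⟨-, hJmax⟩
    haveI := hJmax
    haveI : FiniteDimensional ℂ (A ⧸ J) :=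
      Module.Finite.of_surjective (Ideal.Quotient.mkₐ ℂ J).toLinearMap
        (Ideal.Quotient.mkₐ_surjective ℂ J)
    haveI : Algebra.IsIntegral ℂ (A ⧸ J) := Algebra.IsIntegral.of_finite ℂ _
    have hbij : Function.Bijective (algebraMap ℂ (A ⧸ J)) :=
      ⟨(algebraMap ℂ (A ⧸ J)).injective,
        IsAlgClosed.algebraMap_bijective_of_isIntegral.2⟩
    let eqv := AlgEquiv.ofBijective (Algebra.ofId ℂ (A ⧸ J)) hbij
    have h0 := hu (eqv.symm.toAlgHom.comp (Ideal.Quotient.mkₐ ℂ J))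
    have h1 : (Ideal.Quotient.mkₐ ℂ J) u = 0 := by
      have := congrArg eqv h0
      simpa using this
    have h2 : Ideal.Quotient.mk J u = 0 := by rwa [Ideal.Quotient.mkₐ_eq_mk] at h1
    exact (Ideal.Quotient.eq_zero_iff_mem).mp h2
  obtain ⟨n, hn⟩ := IsArtinianRing.isNilpotent_jacobson_bot (R := A)
  refine ⟨n, ?_⟩
  have := Ideal.pow_mem_pow hmem n
  rw [hn] at this
  simpa using this

/-- `x` is group-like: `x ≠ 0` and `μ†(x) = x ⊗ x`, i.e.
`⟨μ(u ⊗ v), x⟩ = ⟨u, x⟩⟨v, x⟩` for all `u v`. -/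
def IsGrouplike {H : Type*} [NormedAddCommGroup H] [InnerProductSpace ℂ H]
    (m : H →L[ℂ] H →L[ℂ] H) (x : H) : Prop :=
  x ≠ 0 ∧ ∀ u v : H, ⟪x, m u v⟫ = ⟪x, u⟫ * ⟪x, v⟫

section CD

variable {H : Type*} [NormedAddCommGroup H] [InnerProductSpace ℂ H]

/-- Semisimplicity: if a unit exists, every vector orthogonal to all group-like
elements is zero. -/
lemma frob_semisimple [FiniteDimensional ℂ H] (m : H →L[ℂ] H →L[ℂ] H)
    (hcomm : ∀ u v : H, m u v = m v u)
    (hassoc : ∀ u v w : H, m (m u v) w = m u (m v w))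
    (hfrob : ∀ u : H, ∃ us : H, ∀ v w : H, ⟪m u v, w⟫ = ⟪v, m us w⟫)
    (e : H) (he : ∀ u : H, m e u = u)
    (u : H) (hg : ∀ x : H, IsGrouplike m x → ⟪x, u⟫ = 0) : u = 0 := by
  letI ringH : CommRing H :=
    { (inferInstance : AddCommGroup H) with
      mul := fun a b => m a b
      left_distrib := fun a b c => map_add (m a) b c
      right_distrib := fun a b c => by
        show m (a + b) c = m a c + m b c
        rw [map_add]; rfl
      zero_mul := fun a => by show m 0 a = 0; rw [map_zero]; rfl
      mul_zero := fun a => by show m a 0 = 0; exact map_zero (m a)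
      mul_assoc := hassoc
      one := e
      one_mul := he
      mul_one := fun a => by show m a e = a; rw [hcomm]; exact he a
      mul_comm := hcomm }
  letI algH : Algebra ℂ H := Algebra.ofModule
    (fun c x y => by show m (c • x) y = c • (m x y); rw [map_smul]; rfl)
    (fun c x y => by show m x (c • y) = c • (m x y); exact map_smul (m x) c y)
  have hchar : ∀ χ : H →ₐ[ℂ] ℂ, χ u = 0 := by
    intro χ
    set f := LinearMap.toContinuousLinearMap (χ.toLinearMap) with hf
    set x := (InnerProductSpace.toDual ℂ H).symm f with hxdef
    have hx : ∀ v, ⟪x, v⟫ = χ v := by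
      intro v
      rw [hxdef]
      exact InnerProductSpace.toDual_symm_apply
    have hgx : IsGrouplike m x := by
      constructor
      · intro h0
        have h1 : (χ e : ℂ) = 0 := by rw [← hx, h0, inner_zero_left]
        have h2 : (χ e : ℂ) = 1 := map_one χ
        rw [h1] at h2; exact zero_ne_one h2
      · intro a b
        rw [hx, hx, hx]
        exact map_mul χ a b
    rw [← hx u]
    exact hg x hgx
  obtain ⟨n, hn⟩ := char_nilpotent u hchar
  have hpow : ∀ (k : ℕ) (v : H), ((m u) ^ k) v = m (u ^ k) v := by
    intro k
    induction k with
    | zero => intro v; rw [pow_zero, pow_zero]; exact (he v).symm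
    | succ k ih =>
      intro v
      rw [pow_succ' (m u) k, ContinuousLinearMap.mul_apply, ih, pow_succ' u k]
      exact (hassoc u (u ^ k) v).symm
  obtain ⟨us, hus⟩ := hfrob u
  have hadj : ContinuousLinearMap.adjoint (m u) = m us := by
    have h1 : m u = ContinuousLinearMap.adjoint (m us) :=
      (ContinuousLinearMap.eq_adjoint_iff (m u) (m us)).mpr hus
    rw [h1, ContinuousLinearMap.adjoint_adjoint]
  have hcom : ∀ z, (m u) ((ContinuousLinearMap.adjoint (m u)) z)
      = (ContinuousLinearMap.adjoint (m u)) ((m u) z) := by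
    intro z
    rw [hadj, ← hassoc, ← hassoc, hcomm u us]
  have hzero : ∀ v, m u v = 0 := by
    apply normal_nilpotent (m u) hcom n
    intro v
    rw [hpow (n + 1) v]
    have hun : u ^ (n + 1) = 0 := by rw [pow_succ, hn, zero_mul]
    rw [hun, map_zero]; rfl
  have := hzero e
  rw [hcomm u e, he u] at this
  exact this

end CD

/-- For a finite-dimensional commutative Hilbertian Frobenius
semigroup (Frobenius via the equivalent `H*`-adjoint formulation): existence of a unit
⟺ `μ` surjective (the products span `H`) ⟺ `μ†` injective (no nonzero vector is
orthogonal to all products) ⟺ semisimplicity (trivial Jacobson radical, i.e. the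
orthogonal complement of the group-like elements is trivial). -/
theorem stmt_14 {H : Type*} [NormedAddCommGroup H] [InnerProductSpace ℂ H]
    [FiniteDimensional ℂ H]
    (m : H →L[ℂ] H →L[ℂ] H)
    (hcomm : ∀ u v : H, m u v = m v u)
    (hassoc : ∀ u v w : H, m (m u v) w = m u (m v w))
    (hfrob : ∀ u : H, ∃ us : H, ∀ v w : H, ⟪m u v, w⟫ = ⟪v, m us w⟫) :
    ((∃ e : H, ∀ u : H, m e u = u) ↔
      Submodule.span ℂ (Set.range fun p : H × H => m p.1 p.2) = ⊤) ∧
    ((Submodule.span ℂ (Set.range fun p : H × H => m p.1 p.2) = ⊤) ↔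
      ∀ u : H, (∀ v w : H, ⟪u, m v w⟫ = 0) → u = 0) ∧
    ((∀ u : H, (∀ v w : H, ⟪u, m v w⟫ = 0) → u = 0) ↔
      ∀ u : H, (∀ x : H, IsGrouplike m x → ⟪x, u⟫ = 0) → u = 0) := by
  set S : Set H := Set.range fun p : H × H => m p.1 p.2 with hS
  -- B ↔ C
  have hBC : (Submodule.span ℂ S = ⊤) ↔
      ∀ u : H, (∀ v w : H, ⟪u, m v w⟫ = 0) → u = 0 := by
    constructor
    · intro hspan u hu
      have hall : ∀ s ∈ Submodule.span ℂ S, ⟪u, s⟫ = 0 := by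
        intro s hs
        induction hs using Submodule.span_induction with
        | mem x hx =>
          obtain ⟨⟨v, w⟩, rfl⟩ := hx
          exact hu v w
        | zero => exact inner_zero_right u
        | add x y hx hy ihx ihy => rw [inner_add_right, ihx, ihy, add_zero]
        | smul a x hx ihx => rw [inner_smul_right, ihx, mul_zero]
      have hu0 : ⟪u, u⟫ = 0 := hall u (hspan ▸ Submodule.mem_top)
      exact inner_self_eq_zero.mp hu0
    · intro hC
      rw [← Submodule.orthogonal_eq_bot_iff]
      rw [Submodule.eq_bot_iff]
      intro u hu
      have hu' : ∀ s ∈ Submodule.span ℂ S, ⟪u, s⟫ = 0 :=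
        (Submodule.mem_orthogonal' _ u).mp hu
      exact hC u fun v w => hu' _ (Submodule.subset_span ⟨(v, w), rfl⟩)
  -- C → unit (A)
  have hCA : (∀ u : H, (∀ v w : H, ⟪u, m v w⟫ = 0) → u = 0) →
      ∃ e : H, ∀ u : H, m e u = u := by
    intro hC
    exact frob_unit m hassoc hfrob fun u hu =>
      hC u ((frob_ann m hassoc hfrob u).mpr hu)
  -- A → B
  have hAB : (∃ e : H, ∀ u : H, m e u = u) → Submodule.span ℂ S = ⊤ := by
    rintro ⟨e, he⟩
    rw [eq_top_iff]
    intro u _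
    have : u ∈ S := ⟨(e, u), he u⟩
    exact Submodule.subset_span this
  refine ⟨⟨hAB, fun hB => hCA (hBC.mp hB)⟩, hBC, ?_⟩
  constructor
  · -- C → D
    intro hC u hg
    obtain ⟨e, he⟩ := hCA hC
    exact frob_semisimple m hcomm hassoc hfrob e he u hg
  · -- D → C
    intro hD u hu
    have hann : ∀ v : H, m v u = 0 := (frob_ann m hassoc hfrob u).mp hu
    apply hD
    intro x hx
    have h1 : ⟪x, m x u⟫ = ⟪x, x⟫ * ⟪x, u⟫ := hx.2 x u
    rw [hann x, inner_zero_right] at h1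
    have hxx : ⟪x, x⟫ ≠ 0 := fun h => hx.1 (inner_self_eq_zero.mp h)
    exact (mul_eq_zero.mp h1.symm).resolve_left hxx
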